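/- The limiting Strategy-3 scheme is a consistent implicit discretization of the diffusion equation: as ε → 0 with well-prepared bounded data, the macroscopic update of the IMEX-BDF s-step scheme with Strategy 3 becomes ρ_h^{n+s} = Σ_{k=0}^{s-1} a_k ρ_h^{n+k} + Δt c_s ( ⟨v²⟩ D_h^+ ( σ_s^{-1} D_h^- ρ_h^{n+s} ) − σ_a ρ_h^{n+s} + G_h ), and the linear system for ρ_h^{n+s} is uniquely solvable since the operator (1 + Δt c_s σ_a) I − Δt c_s ⟨v²⟩ D_h^+ (σ_s^{-1} D_h^-) is symmetric positive definite when D_h^+ = −(D_h^-)^T and σ_s > 0 constant. -/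

import Mathlib

open Finset Filter Topology RealInnerProductSpace

/-- The limiting Strategy-3 scheme is a consistent implicit discretization of the diffusion
equation: as `ε → 0⁺` with well-prepared bounded data, the macro update becomes
`ρ_h^{n+s} = Σ_k a_k ρ_h^{n+k} + Δt c_s(⟨v²⟩ 𝒟_h^+(σ_s⁻¹ 𝒟_h^- ρ_h^{n+s}) − σ_a ρ_h^{n+s} + G_h)`,
and the corresponding linear operator is SPD (since `𝒟_h^+ = −(𝒟_h^-)ᵀ`, `σ_s > 0`),
so the implicit system is uniquely solvable. -/
theorem stmt_18 {U : Type*} [NormedAddCommGroup U] [InnerProductSpace ℝ U]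
    [FiniteDimensional ℝ U]
    (Nv s : ℕ) [NeZero Nv] (hs : 1 ≤ s)
    (a b : Fin s → ℝ) (c : ℝ) (ha : ∑ k, a k = 1) (hc : c = ∑ k, b k) (hcpos : 0 < c)
    (Δt σs σa : ℝ) (hΔt : 0 < Δt) (hσs : 0 < σs) (hσa : 0 ≤ σa)
    (ω v : Fin Nv → ℝ) (hω : ∀ q, 0 < ω q) (hω1 : ∑ q, ω q = 1)
    (Dm Dp : U →ₗ[ℝ] U)
    (hadj : ∀ u w : U, ⟪Dp u, w⟫ = -⟪u, Dm w⟫)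
    (T : (Fin Nv → U) →ₗ[ℝ] (Fin Nv → U))   -- the explicit free-streaming operator
    (Gh : U)
    (ρprev : ℝ → Fin s → U) (gprev : ℝ → Fin s → Fin Nv → U)
    (ρnew : ℝ → U) (gnew : ℝ → Fin Nv → U)
    -- Strategy-3 macro update for each ε > 0
    (hmac : ∀ ε > (0 : ℝ),
      ρnew ε = (∑ k : Fin s, a k • ρprev ε k)
        - (Δt * c) • (Dp (∑ q, (ω q * v q) • gnew ε q) + σa • ρnew ε - Gh))
    -- Strategy-3 micro update for each ε > 0
    (hmic : ∀ ε > (0 : ℝ), ∀ q : Fin Nv,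
      (ε ^ 2 + Δt * c * (σs + ε ^ 2 * σa)) • gnew ε q
        = ε ^ 2 • (∑ k : Fin s, a k • gprev ε k q)
          - (Δt * ε) • (∑ k : Fin s, b k • T (gprev ε k) q)
          - (Δt * c * v q) • Dm (ρnew ε))
    -- well-prepared bounded data
    (hbdd : ∃ C : ℝ, ∀ᶠ ε in 𝓝[>] (0 : ℝ), ∀ k : Fin s,
      ‖ρprev ε k‖ ≤ C ∧ ∀ q, ‖gprev ε k q‖ ≤ C)
    -- convergence as ε → 0⁺
    (ρlim : Fin s → U) (ρstar : U) (glim : Fin Nv → U)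
    (hconv1 : ∀ k, Tendsto (fun ε => ρprev ε k) (𝓝[>] (0 : ℝ)) (𝓝 (ρlim k)))
    (hconv2 : Tendsto (fun ε => ρnew ε) (𝓝[>] (0 : ℝ)) (𝓝 ρstar))
    (hconv3 : ∀ q, Tendsto (fun ε => gnew ε q) (𝓝[>] (0 : ℝ)) (𝓝 (glim q))) :
    -- the limiting implicit diffusion update
    (ρstar = (∑ k : Fin s, a k • ρlim k)
        + (Δt * c) • ((∑ q, ω q * (v q) ^ 2) • Dp ((1 / σs) • Dm ρstar)
            - σa • ρstar + Gh)) ∧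
    -- unique solvability of the implicit system
    (∀ F : U, ∃! ρ : U,
      (1 + Δt * c * σa) • ρ
        - (Δt * c * (∑ q, ω q * (v q) ^ 2) / σs) • Dp (Dm ρ) = F) := by
  classical
  have hne : (𝓝[>] (0:ℝ)).NeBot := nhdsGT_neBot 0
  have hDmc : Continuous Dm := Dm.continuous_of_finiteDimensional
  have hDpc : Continuous Dp := Dp.continuous_of_finiteDimensional
  have hTc : Continuous T := T.continuous_of_finiteDimensional
  obtain ⟨C, hC⟩ := hbdd
  set C' := max C 0 with hC'def
  have hC'0 : (0:ℝ) ≤ C' := le_max_right _ _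
  have hC2 : ∀ᶠ ε in 𝓝[>] (0:ℝ), ∀ k, ‖ρprev ε k‖ ≤ C' ∧ ∀ q, ‖gprev ε k q‖ ≤ C' := by
    filter_upwards [hC] with ε h k
    exact ⟨(h k).1.trans (le_max_left _ _), fun q => ((h k).2 q).trans (le_max_left _ _)⟩
  have hmem : ∀ᶠ ε in 𝓝[>] (0:ℝ), ε ∈ Set.Ioi (0:ℝ) := eventually_mem_nhdsWithin
  -- operator norm for T
  set T' := LinearMap.toContinuousLinearMap T with hT'def
  have hT'app : ∀ x, T' x = T x := fun x => rfl
  -- step 1: limit of the micro equation, for each q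
  have hglim : ∀ q : Fin Nv, glim q = (-(v q) / σs) • Dm ρstar := by
    intro q
    have hcoef : Tendsto (fun ε : ℝ => ε ^ 2 + Δt * c * (σs + ε ^ 2 * σa))
        (𝓝[>] (0:ℝ)) (𝓝 (Δt * c * σs)) := by
      have h := (Continuous.tendsto (by fun_prop :
          Continuous fun ε : ℝ => ε ^ 2 + Δt * c * (σs + ε ^ 2 * σa)) 0).mono_left
          (nhdsWithin_le_nhds (s := Set.Ioi (0:ℝ)))
      have : (0:ℝ) ^ 2 + Δt * c * (σs + (0:ℝ) ^ 2 * σa) = Δt * c * σs := by ring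
      rwa [this] at h
    have L1 : Tendsto (fun ε => (ε ^ 2 + Δt * c * (σs + ε ^ 2 * σa)) • gnew ε q)
        (𝓝[>] (0:ℝ)) (𝓝 ((Δt * c * σs) • glim q)) := hcoef.smul (hconv3 q)
    -- term 1 of RHS
    have R1 : Tendsto (fun ε => (ε:ℝ) ^ 2 • (∑ k : Fin s, a k • gprev ε k q))
        (𝓝[>] (0:ℝ)) (𝓝 0) := by
      apply Tendsto.zero_smul_isBoundedUnder_le
      · have h := ((continuous_pow 2).tendsto (0:ℝ)).mono_left
          (nhdsWithin_le_nhds (s := Set.Ioi (0:ℝ)))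
        simpa using h
      · refine ⟨∑ k : Fin s, |a k| * C', eventually_map.2 ?_⟩
        filter_upwards [hC2] with ε h
        calc ‖∑ k : Fin s, a k • gprev ε k q‖ ≤ ∑ k : Fin s, ‖a k • gprev ε k q‖ :=
              norm_sum_le _ _
          _ ≤ ∑ k : Fin s, |a k| * C' := by
              refine Finset.sum_le_sum fun k _ => ?_
              rw [norm_smul, Real.norm_eq_abs]
              exact mul_le_mul_of_nonneg_left ((h k).2 q) (abs_nonneg _)
    -- term 2 of RHS
    have R2 : Tendsto (fun ε => (Δt * ε) • (∑ k : Fin s, b k • T (gprev ε k) q))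
        (𝓝[>] (0:ℝ)) (𝓝 0) := by
      apply Tendsto.zero_smul_isBoundedUnder_le
      · have h : Tendsto (fun ε : ℝ => Δt * ε) (𝓝 (0:ℝ)) (𝓝 (Δt * 0)) :=
          (continuous_const.mul continuous_id).tendsto (0:ℝ)
        rw [mul_zero] at h
        exact h.mono_left (nhdsWithin_le_nhds (s := Set.Ioi (0:ℝ)))
      · refine ⟨∑ k : Fin s, |b k| * (‖T'‖ * C'), eventually_map.2 ?_⟩
        filter_upwards [hC2] with ε h
        calc ‖∑ k : Fin s, b k • T (gprev ε k) q‖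
            ≤ ∑ k : Fin s, ‖b k • T (gprev ε k) q‖ := norm_sum_le _ _
          _ ≤ ∑ k : Fin s, |b k| * (‖T'‖ * C') := by
              refine Finset.sum_le_sum fun k _ => ?_
              rw [norm_smul, Real.norm_eq_abs]
              refine mul_le_mul_of_nonneg_left ?_ (abs_nonneg _)
              have h1 : ‖T (gprev ε k) q‖ ≤ ‖T (gprev ε k)‖ := norm_le_pi_norm _ q
              have h2 : ‖T (gprev ε k)‖ ≤ ‖T'‖ * ‖gprev ε k‖ := by
                rw [← hT'app]; exact T'.le_opNorm _
              have h3 : ‖gprev ε k‖ ≤ C' :=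
                (pi_norm_le_iff_of_nonneg hC'0).2 fun i => (h k).2 i
              calc ‖T (gprev ε k) q‖ ≤ ‖T'‖ * ‖gprev ε k‖ := h1.trans h2
                _ ≤ ‖T'‖ * C' := mul_le_mul_of_nonneg_left h3 T'.opNorm_nonneg
    -- term 3 of RHS
    have R3 : Tendsto (fun ε => (Δt * c * v q) • Dm (ρnew ε))
        (𝓝[>] (0:ℝ)) (𝓝 ((Δt * c * v q) • Dm ρstar)) :=
      (((hDmc.tendsto ρstar).comp hconv2).const_smul _)
    have Rtot : Tendsto (fun ε => (ε:ℝ) ^ 2 • (∑ k : Fin s, a k • gprev ε k q)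
          - (Δt * ε) • (∑ k : Fin s, b k • T (gprev ε k) q)
          - (Δt * c * v q) • Dm (ρnew ε))
        (𝓝[>] (0:ℝ)) (𝓝 (0 - 0 - (Δt * c * v q) • Dm ρstar)) := (R1.sub R2).sub R3
    have heq : (fun ε => (ε ^ 2 + Δt * c * (σs + ε ^ 2 * σa)) • gnew ε q)
        =ᶠ[𝓝[>] (0:ℝ)] (fun ε => (ε:ℝ) ^ 2 • (∑ k : Fin s, a k • gprev ε k q)
          - (Δt * ε) • (∑ k : Fin s, b k • T (gprev ε k) q)
          - (Δt * c * v q) • Dm (ρnew ε)) := by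
      filter_upwards [hmem] with ε hε
      exact hmic ε hε q
    have hkey : (Δt * c * σs) • glim q = 0 - 0 - (Δt * c * v q) • Dm ρstar :=
      tendsto_nhds_unique (L1.congr' heq) Rtot
    have hκ : Δt * c * σs ≠ 0 := by positivity
    have := congrArg (fun x : U => (Δt * c * σs)⁻¹ • x) hkey
    simp only [smul_smul, inv_mul_cancel₀ hκ, one_smul, zero_sub, sub_zero, smul_neg] at this
    rw [this, ← neg_smul]
    congr 1
    have h1 : Δt ≠ 0 := hΔt.ne'
    have h2 : c ≠ 0 := hcpos.ne'
    have h3 : σs ≠ 0 := hσs.ne'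
    field_simp
  -- step 2: limit of the macro equation
  have hS : (∑ q, (ω q * v q) • glim q)
      = (∑ q, -(ω q * v q ^ 2) / σs) • Dm ρstar := by
    rw [Finset.sum_smul]
    refine Finset.sum_congr rfl fun q _ => ?_
    rw [hglim q, smul_smul]
    congr 1
    ring
  have RHSlim : Tendsto (fun ε => (∑ k : Fin s, a k • ρprev ε k)
        - (Δt * c) • (Dp (∑ q, (ω q * v q) • gnew ε q) + σa • ρnew ε - Gh))
      (𝓝[>] (0:ℝ)) (𝓝 ((∑ k : Fin s, a k • ρlim k)
        - (Δt * c) • (Dp (∑ q, (ω q * v q) • glim q) + σa • ρstar - Gh))) := by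
    refine Tendsto.sub ?_ (Tendsto.const_smul ?_ _)
    · exact tendsto_finset_sum _ fun k _ => (hconv1 k).const_smul _
    · refine Tendsto.sub (Tendsto.add ?_ (hconv2.const_smul _)) tendsto_const_nhds
      refine ((hDpc.tendsto _).comp ?_)
      exact tendsto_finset_sum _ fun q _ => (hconv3 q).const_smul _
  have hmac' : (fun ε => ρnew ε) =ᶠ[𝓝[>] (0:ℝ)]
      (fun ε => (∑ k : Fin s, a k • ρprev ε k)
        - (Δt * c) • (Dp (∑ q, (ω q * v q) • gnew ε q) + σa • ρnew ε - Gh)) := by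
    filter_upwards [hmem] with ε hε
    exact hmac ε hε
  have hfinal : ρstar = (∑ k : Fin s, a k • ρlim k)
      - (Δt * c) • (Dp (∑ q, (ω q * v q) • glim q) + σa • ρstar - Gh) :=
    tendsto_nhds_unique (hconv2.congr' hmac') RHSlim
  constructor
  · -- part 1
    have hsum : (∑ q, -(ω q * v q ^ 2) / σs) = -((∑ q, ω q * v q ^ 2) / σs) := by
      rw [← Finset.sum_div, Finset.sum_neg_distrib, neg_div]
    have hX : (∑ q, ω q * v q ^ 2) • Dp ((1 / σs) • Dm ρstar)
        = (-(∑ q, -(ω q * v q ^ 2) / σs)) • Dp (Dm ρstar) := by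
      rw [map_smul, smul_smul]
      congr 1
      rw [hsum]
      ring
    rw [hX]
    conv_lhs => rw [hfinal, hS, map_smul]
    module
  · -- part 2: unique solvability
    intro F
    set α : ℝ := 1 + Δt * c * σa with hαdef
    set β : ℝ := Δt * c * (∑ q, ω q * v q ^ 2) / σs with hβdef
    have hα : 0 < α := by
      have : 0 ≤ Δt * c * σa := by positivity
      linarith
    have hβ : 0 ≤ β := by
      have hsum : 0 ≤ ∑ q, ω q * v q ^ 2 :=
        Finset.sum_nonneg fun q _ => mul_nonneg (hω q).le (sq_nonneg _)
      positivity
    set L : U →ₗ[ℝ] U := α • LinearMap.id - β • (Dp ∘ₗ Dm) with hLdef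
    have hLapp : ∀ x, L x = α • x - β • Dp (Dm x) := fun x => rfl
    have hinner : ∀ x : U, ⟪L x, x⟫ = α * ‖x‖ ^ 2 + β * ‖Dm x‖ ^ 2 := by
      intro x
      rw [hLapp, inner_sub_left, real_inner_smul_left, real_inner_smul_left,
        hadj, real_inner_self_eq_norm_sq, real_inner_self_eq_norm_sq]
      ring
    have hinj : Function.Injective L := by
      rw [← LinearMap.ker_eq_bot, LinearMap.ker_eq_bot']
      intro x hx
      have h0 : α * ‖x‖ ^ 2 + β * ‖Dm x‖ ^ 2 = 0 := by
        rw [← hinner, hx, inner_zero_left]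
      have hn : ‖x‖ ^ 2 = 0 := by
        nlinarith [sq_nonneg ‖x‖, sq_nonneg ‖Dm x‖, mul_nonneg hβ (sq_nonneg ‖Dm x‖)]
      rwa [pow_eq_zero_iff (by norm_num : 2 ≠ 0), norm_eq_zero] at hn
    have hsurj : Function.Surjective L := LinearMap.injective_iff_surjective.mp hinj
    obtain ⟨ρ, hρ⟩ := hsurj F
    refine ⟨ρ, hρ, fun y hy => hinj (hy.trans hρ.symm)⟩
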